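/- Let E be a compact metric space, f₁,…,f_n bounded continuous real functions on E, c₁,…,c_n real numbers, and K the set of Borel probability measures μ on E with ∫ f_i dμ = c_i for all i. Then μ ∈ K is an extreme point of K if and only if the support of μ has at most n+1 points, and writing supp(μ) = {x₁,…,x_k}, the vectors (f₁(x_i),…,f_n(x_i),1) ∈ ℝ^{n+1}, 1 ≤ i ≤ k, are linearly independent. -/

import Mathlib

open MeasureTheory Set
open scoped ENNReal NNReal

set_option linter.unusedSectionVars false
set_option maxHeartbeats 1000000

section Helpers
variable {E : Type*} [MetricSpace E] [CompactSpace E] [MeasurableSpace E] [BorelSpace E]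

lemma cont_integrable (g : E → ℝ) (hg : Continuous g) (ν : Measure E) [IsFiniteMeasure ν] :
    Integrable g ν :=
  integrableOn_univ.mp (hg.continuousOn.integrableOn_compact isCompact_univ)

lemma singleton_integral (ν : Measure E) (y : E) (g : E → ℝ) :
    ∫ x in ({y} : Set E), g x ∂ν = (ν {y}).toReal * g y := by
  rw [Measure.restrict_singleton, integral_smul_measure, integral_dirac, smul_eq_mul]

lemma atomicRepr (ν : Measure E) (s : Finset E) (h : ν (↑s : Set E)ᶜ = 0) :
    ν = ∑ x ∈ s, ν {x} • Measure.dirac x := by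
  classical
  ext A hA
  have h2 : ν (A \ ↑s) = 0 := measure_mono_null (fun x hx => hx.2) h
  have h1 : ν A = ν (A ∩ ↑s) := by
    rw [← measure_inter_add_diff A s.measurableSet, h2, add_zero]
  set t := s.filter (· ∈ A) with ht
  have hts : (A ∩ ↑s : Set E) = ↑t := by ext x; simp [ht, and_comm]
  have h3 : ν ↑t = ∑ x ∈ t, ν {x} := by
    rw [← Set.biUnion_of_singleton (↑t : Set E)]
    rw [show (⋃ x ∈ (↑t : Set E), {x}) = ⋃ x ∈ t, {x} from by simp]
    exact measure_biUnion_finset (fun x _ y _ hxy => by simp [hxy])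
      (fun b _ => measurableSet_singleton b)
  have h4 : (∑ x ∈ s, ν {x} • Measure.dirac x) A = ∑ x ∈ t, ν {x} := by
    rw [Measure.finset_sum_apply]
    rw [ht, Finset.sum_filter]
    refine Finset.sum_congr rfl fun x _ => ?_
    rw [Measure.smul_apply, Measure.dirac_apply' _ hA, smul_eq_mul, Set.indicator_apply]
    by_cases hx : x ∈ A <;> simp [hx]
  rw [h4, h1, hts, h3]

lemma atomic_integral (ν : Measure E) [IsProbabilityMeasure ν] (s : Finset E)
    (h : ν (↑s : Set E)ᶜ = 0) (g : E → ℝ) (hg : Continuous g) :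
    ∫ x, g x ∂ν = ∑ x ∈ s, (ν {x}).toReal * g x := by
  conv_lhs => rw [atomicRepr ν s h]
  rw [integral_finset_sum_measure (fun x _ =>
    (cont_integrable g hg _).smul_measure (measure_ne_top ν _))]
  refine Finset.sum_congr rfl fun x _ => ?_
  rw [integral_smul_measure, integral_dirac, smul_eq_mul]

lemma atomic_mass (ν : Measure E) [IsProbabilityMeasure ν] (s : Finset E)
    (h : ν (↑s : Set E)ᶜ = 0) : ∑ x ∈ s, (ν {x}).toReal = 1 := by
  have h1 : ∑ x ∈ s, ν {x} = 1 := by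
    have h0 := congrArg (fun m : Measure E => m Set.univ) (atomicRepr ν s h)
    simpa [Measure.finset_sum_apply, Measure.smul_apply] using h0.symm
  rw [← ENNReal.toReal_sum (fun x _ => measure_ne_top ν _), h1]
  simp

lemma key {n : ℕ} (f : Fin n → E → ℝ) (hf : ∀ i, Continuous (f i)) (c : Fin n → ℝ)
    (μ : Measure E) [IsProbabilityMeasure μ] (hμ : ∀ i, (∫ x, f i x ∂μ) = c i)
    (Hext : ∀ μ₁ μ₂ : Measure E, IsProbabilityMeasure μ₁ → IsProbabilityMeasure μ₂ →
        (∀ i, (∫ x, f i x ∂μ₁) = c i) → (∀ i, (∫ x, f i x ∂μ₂) = c i) →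
        ∀ α : ℝ, 0 < α → α < 1 →
        μ = ENNReal.ofReal α • μ₁ + ENNReal.ofReal (1 - α) • μ₂ → μ₁ = μ₂)
    {ι : Type*} [Fintype ι] (A : ι → Set E) (hA : ∀ j, MeasurableSet (A j))
    (hdisj : Pairwise (Function.onFun Disjoint A))
    (a : ι → ℝ) (h1 : ∑ j, a j * (μ (A j)).toReal = 0)
    (h2 : ∀ i, ∑ j, a j * ∫ x in A j, f i x ∂μ = 0)
    (j₀ : ι) (hj₀ : a j₀ ≠ 0) (hμj₀ : μ (A j₀) ≠ 0) : False := by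
  classical
  haveI : Nonempty ι := ⟨j₀⟩
  set M : ℝ := Finset.univ.sup' Finset.univ_nonempty (fun j => |a j|) with hM
  have hMpos : 0 < M := by
    rw [hM]
    exact lt_of_lt_of_le (abs_pos.2 hj₀)
      (Finset.le_sup' (fun j => |a j|) (Finset.mem_univ j₀))
  set a' : ι → ℝ := fun j => a j / M with ha'
  have habs : ∀ j, |a' j| ≤ 1 := by
    intro j
    rw [ha', abs_div, abs_of_pos hMpos, div_le_one hMpos, hM]
    exact Finset.le_sup' (fun j => |a j|) (Finset.mem_univ j)
  set G : E → ℝ := fun x => ∑ j, (A j).indicator (fun _ => a' j) x with hG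
  have hGmeas : Measurable G :=
    Finset.univ.measurable_sum (fun j _ => measurable_const.indicator (hA j))
  have hGval : ∀ j, ∀ x ∈ A j, G x = a' j := by
    intro j x hx
    simp only [hG]
    rw [Finset.sum_eq_single_of_mem j (Finset.mem_univ j)
      (fun k _ hkj => Set.indicator_of_notMem
        (fun hxk => Set.disjoint_left.1 (hdisj hkj) hxk hx) _)]
    exact Set.indicator_of_mem hx _
  have hGbound : ∀ x, |G x| ≤ 1 := by
    intro x
    by_cases hx : ∃ j, x ∈ A j
    · obtain ⟨j, hj⟩ := hx
      rw [hGval j x hj]; exact habs j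
    · push_neg at hx
      rw [hG]
      simp only
      rw [Finset.sum_eq_zero (fun j _ => Set.indicator_of_notMem (hx j) _)]
      norm_num
  have hGint : Integrable G μ :=
    integrable_finset_sum _ (fun j _ => (integrable_const _).indicator (hA j))
  have hG0 : ∫ x, G x ∂μ = 0 := by
    rw [hG]
    rw [integral_finset_sum _ (fun j _ => (integrable_const _).indicator (hA j))]
    have : ∀ j ∈ Finset.univ, ∫ x, (A j).indicator (fun _ => a' j) x ∂μ
        = (a j * (μ (A j)).toReal) / M := by
      intro j _
      rw [integral_indicator_const _ (hA j), smul_eq_mul, ha', measureReal_def]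
      ring
    rw [Finset.sum_congr rfl this, ← Finset.sum_div, h1, zero_div]
  have hfInt : ∀ i, Integrable (f i) μ := fun i => cont_integrable _ (hf i) μ
  have hGfmul : ∀ i, (fun x => G x * f i x)
      = fun x => ∑ j, (A j).indicator (fun y => a' j * f i y) x := by
    intro i
    funext x
    rw [hG]
    simp only
    rw [Finset.sum_mul]
    refine Finset.sum_congr rfl fun j _ => ?_
    by_cases hx : x ∈ A j <;> simp [Set.indicator_of_mem, Set.indicator_of_notMem, hx]
  have hGfint : ∀ i, Integrable (fun x => G x * f i x) μ := by
    intro i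
    rw [hGfmul i]
    exact integrable_finset_sum _ (fun j _ => (((hfInt i)).const_mul _).indicator (hA j))
  have hGf : ∀ i, ∫ x, G x * f i x ∂μ = 0 := by
    intro i
    rw [hGfmul i]
    rw [integral_finset_sum _ (fun j _ => (((hfInt i)).const_mul _).indicator (hA j))]
    have : ∀ j ∈ Finset.univ, ∫ x, (A j).indicator (fun y => a' j * f i y) x ∂μ
        = (a j * ∫ x in A j, f i x ∂μ) / M := by
      intro j _
      rw [integral_indicator (hA j), integral_const_mul, ha']
      ring
    rw [Finset.sum_congr rfl this, ← Finset.sum_div, h2 i, zero_div]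
  have h1G : ∀ x, 0 ≤ 1 + G x := fun x => by have := (abs_le.1 (hGbound x)).1; linarith
  have h2G : ∀ x, 0 ≤ 1 - G x := fun x => by have := (abs_le.1 (hGbound x)).2; linarith
  set d₁ : E → ℝ≥0∞ := fun x => ENNReal.ofReal (1 + G x) with hd₁
  set d₂ : E → ℝ≥0∞ := fun x => ENNReal.ofReal (1 - G x) with hd₂
  have hd₁m : Measurable d₁ := (measurable_const.add hGmeas).ennreal_ofReal
  have hd₂m : Measurable d₂ := (measurable_const.sub hGmeas).ennreal_ofReal
  have hint1 : Integrable (fun x => 1 + G x) μ := (integrable_const 1).add hGint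
  have hint2 : Integrable (fun x => 1 - G x) μ := (integrable_const 1).sub hGint
  have hm1 : μ.withDensity d₁ Set.univ = 1 := by
    rw [withDensity_apply _ MeasurableSet.univ, Measure.restrict_univ, hd₁,
      ← ofReal_integral_eq_lintegral_ofReal hint1 (ae_of_all _ h1G),
      integral_add (integrable_const 1) hGint, hG0, integral_const]
    simp
  have hm2 : μ.withDensity d₂ Set.univ = 1 := by
    rw [withDensity_apply _ MeasurableSet.univ, Measure.restrict_univ, hd₂,
      ← ofReal_integral_eq_lintegral_ofReal hint2 (ae_of_all _ h2G),
      integral_sub (integrable_const 1) hGint, hG0, integral_const]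
    simp
  haveI P1 : IsProbabilityMeasure (μ.withDensity d₁) := ⟨hm1⟩
  haveI P2 : IsProbabilityMeasure (μ.withDensity d₂) := ⟨hm2⟩
  have hrepr : ∀ (h : E → ℝ), Measurable h → (∀ x, 0 ≤ h x) → ∀ g : E → ℝ,
      ∫ x, g x ∂(μ.withDensity (fun x => ENNReal.ofReal (h x))) = ∫ x, h x * g x ∂μ := by
    intro h hhm hh0 g
    have he : (fun x => ENNReal.ofReal (h x))
        = fun x => (((fun x => (h x).toNNReal) x : ℝ≥0) : ℝ≥0∞) := rfl
    rw [he, integral_withDensity_eq_integral_smul hhm.real_toNNReal]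
    congr 1
    funext x
    rw [NNReal.smul_def, Real.coe_toNNReal _ (hh0 x), smul_eq_mul]
  have hc₁ : ∀ i, ∫ x, f i x ∂(μ.withDensity d₁) = c i := by
    intro i
    rw [hd₁, hrepr (fun x => 1 + G x) (measurable_const.add hGmeas) h1G]
    have he : (fun x => (1 + G x) * f i x) = fun x => f i x + G x * f i x := by
      funext x; ring
    rw [he, integral_add (hfInt i) (hGfint i), hμ i, hGf i, add_zero]
  have hc₂ : ∀ i, ∫ x, f i x ∂(μ.withDensity d₂) = c i := by
    intro i
    rw [hd₂, hrepr (fun x => 1 - G x) (measurable_const.sub hGmeas) h2G]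
    have he : (fun x => (1 - G x) * f i x) = fun x => f i x - G x * f i x := by
      funext x; ring
    rw [he, integral_sub (hfInt i) (hGfint i), hμ i, hGf i, sub_zero]
  have hdec : μ = ENNReal.ofReal (1/2) • μ.withDensity d₁
      + ENNReal.ofReal (1 - 1/2) • μ.withDensity d₂ := by
    have hhalf : (1 : ℝ) - 1/2 = 1/2 := by norm_num
    rw [hhalf, ← withDensity_smul _ hd₁m, ← withDensity_smul _ hd₂m,
        ← withDensity_add_left (hd₁m.const_smul _)]
    have hfun : ((ENNReal.ofReal (1/2) • d₁) + (ENNReal.ofReal (1/2) • d₂))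
        = (1 : E → ℝ≥0∞) := by
      funext x
      simp only [Pi.add_apply, Pi.smul_apply, smul_eq_mul, hd₁, hd₂, Pi.one_apply]
      rw [← ENNReal.ofReal_mul (by norm_num : (0:ℝ) ≤ 1/2),
          ← ENNReal.ofReal_mul (by norm_num : (0:ℝ) ≤ 1/2),
          ← ENNReal.ofReal_add (by have := h1G x; nlinarith) (by have := h2G x; nlinarith)]
      have he : (1/2 : ℝ) * (1 + G x) + 1/2 * (1 - G x) = 1 := by ring
      rw [he, ENNReal.ofReal_one]
    rw [hfun, withDensity_one]
  have heq := Hext (μ.withDensity d₁) (μ.withDensity d₂) P1 P2 hc₁ hc₂ (1/2)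
    (by norm_num) (by norm_num) hdec
  have hA₁ : μ.withDensity d₁ (A j₀) = ENNReal.ofReal (1 + a' j₀) * μ (A j₀) := by
    rw [withDensity_apply _ (hA j₀),
      setLIntegral_congr_fun (f := d₁) (g := fun _ => ENNReal.ofReal (1 + a' j₀)) (hA j₀) (fun x hx => by
        simp only [hd₁]; rw [hGval j₀ x hx])]
    exact setLIntegral_const _ _
  have hA₂ : μ.withDensity d₂ (A j₀) = ENNReal.ofReal (1 - a' j₀) * μ (A j₀) := by
    rw [withDensity_apply _ (hA j₀),
      setLIntegral_congr_fun (f := d₂) (g := fun _ => ENNReal.ofReal (1 - a' j₀)) (hA j₀) (fun x hx => by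
        simp only [hd₂]; rw [hGval j₀ x hx])]
    exact setLIntegral_const _ _
  rw [heq, hA₂] at hA₁
  rw [ENNReal.mul_left_inj hμj₀ (measure_ne_top μ _)] at hA₁
  rw [ENNReal.ofReal_eq_ofReal_iff (by have := (abs_le.1 (habs j₀)).2; linarith)
    (by have := (abs_le.1 (habs j₀)).1; linarith)] at hA₁
  have : a' j₀ = 0 := by linarith
  exact div_ne_zero hj₀ hMpos.ne' this

lemma claimDisj {n : ℕ} (f : Fin n → E → ℝ) (hf : ∀ i, Continuous (f i)) (c : Fin n → ℝ)
    (μ : Measure E) [IsProbabilityMeasure μ] (hμ : ∀ i, (∫ x, f i x ∂μ) = c i)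
    (Hext : ∀ μ₁ μ₂ : Measure E, IsProbabilityMeasure μ₁ → IsProbabilityMeasure μ₂ →
        (∀ i, (∫ x, f i x ∂μ₁) = c i) → (∀ i, (∫ x, f i x ∂μ₂) = c i) →
        ∀ α : ℝ, 0 < α → α < 1 →
        μ = ENNReal.ofReal α • μ₁ + ENNReal.ofReal (1 - α) • μ₂ → μ₁ = μ₂)
    (A : Fin (n+2) → Set E) (hA : ∀ j, MeasurableSet (A j))
    (hdisj : Pairwise (Function.onFun Disjoint A)) (hpos : ∀ j, μ (A j) ≠ 0) : False := by
  set u : Fin (n+2) → (Fin (n+1) → ℝ) :=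
    fun j => Fin.snoc (fun i => ∫ x in A j, f i x ∂μ) ((μ (A j)).toReal) with hu
  have hdep : ¬ LinearIndependent ℝ u := by
    intro h
    have h2 := h.fintype_card_le_finrank
    rw [Module.finrank_fin_fun, Fintype.card_fin] at h2
    omega
  obtain ⟨b, hb0, j₀, hbj₀⟩ := Fintype.not_linearIndependent_iff.1 hdep
  refine key f hf c μ hμ Hext A hA hdisj b ?_ ?_ j₀ hbj₀ (hpos j₀)
  · have h := congrFun hb0 (Fin.last n)
    simpa [hu, Finset.sum_apply, Fin.snoc_last] using h
  · intro i
    have h := congrFun hb0 (Fin.castSucc i)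
    simpa [hu, Finset.sum_apply, Fin.snoc_castSucc] using h

lemma forward {n : ℕ} (f : Fin n → E → ℝ) (hf : ∀ i, Continuous (f i)) (c : Fin n → ℝ)
    (μ : Measure E) [IsProbabilityMeasure μ] (hμ : ∀ i, (∫ x, f i x ∂μ) = c i)
    (Hext : ∀ μ₁ μ₂ : Measure E, IsProbabilityMeasure μ₁ → IsProbabilityMeasure μ₂ →
        (∀ i, (∫ x, f i x ∂μ₁) = c i) → (∀ i, (∫ x, f i x ∂μ₂) = c i) →
        ∀ α : ℝ, 0 < α → α < 1 →
        μ = ENNReal.ofReal α • μ₁ + ENNReal.ofReal (1 - α) • μ₂ → μ₁ = μ₂) :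
    ∃ s : Finset E, μ (↑s : Set E)ᶜ = 0 ∧ (∀ x ∈ s, μ {x} ≠ 0) ∧ s.card ≤ n + 1 ∧
        LinearIndependent ℝ
          (fun x : ↥s => (Fin.snoc (fun i : Fin n => f i (x : E)) (1 : ℝ) : Fin (n+1) → ℝ)) := by
  classical
  set U : Set E := ⋃₀ {V : Set E | IsOpen V ∧ μ V = 0} with hUdef
  have hU0 : μ U = 0 := by
    obtain ⟨T, hTc, hTsub, hTeq⟩ :=
      TopologicalSpace.isOpen_sUnion_countable {V : Set E | IsOpen V ∧ μ V = 0}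
        (fun V hV => hV.1)
    rw [hUdef, ← hTeq]
    exact (measure_sUnion_null_iff hTc).2 fun V hV => (hTsub hV).2
  have hsupp : ∀ x ∉ U, ∀ V : Set E, IsOpen V → x ∈ V → μ V ≠ 0 := by
    intro x hx V hVo hxV h0
    exact hx ⟨V, ⟨hVo, h0⟩, hxV⟩
  have hcard : ∀ t : Finset E, ↑t ⊆ Uᶜ → t.card ≤ n + 1 := by
    intro t ht
    by_contra hc
    push_neg at hc
    obtain ⟨t', ht't, ht'card⟩ := Finset.exists_subset_card_eq (by omega : n + 2 ≤ t.card)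
    have hcardt' : Fintype.card ↥t' = n + 2 := by simp [ht'card]
    set e := Fintype.equivFinOfCardEq hcardt' with he
    set x : Fin (n+2) → E := fun j => ((e.symm j : ↥t') : E) with hx
    have hxinj : Function.Injective x := fun j k hjk => by
      have := Subtype.coe_injective hjk
      exact e.symm.injective this
    have hxmem : ∀ j, x j ∈ Uᶜ := fun j => ht (ht't (e.symm j).2)
    have hne : (Finset.univ.filter
        (fun p : Fin (n+2) × Fin (n+2) => p.1 ≠ p.2)).Nonempty := by
      refine ⟨(0, 1), ?_⟩
      simp only [Finset.mem_filter, Finset.mem_univ, true_and]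
      exact fun h => by simpa using congrArg Fin.val h
    set δ : ℝ := (Finset.univ.filter
        (fun p : Fin (n+2) × Fin (n+2) => p.1 ≠ p.2)).inf' hne
        (fun p => dist (x p.1) (x p.2)) with hδ
    have hδpos : 0 < δ := by
      rw [hδ, Finset.lt_inf'_iff]
      intro p hp
      exact dist_pos.2 (hxinj.ne ((Finset.mem_filter.1 hp).2))
    have hδle : ∀ j k, j ≠ k → δ ≤ dist (x j) (x k) := by
      intro j k hjk
      have hmem : ((j, k) : Fin (n+2) × Fin (n+2)) ∈ Finset.univ.filter
          (fun p : Fin (n+2) × Fin (n+2) => p.1 ≠ p.2) :=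
        Finset.mem_filter.2 ⟨Finset.mem_univ _, hjk⟩
      exact Finset.inf'_le (fun p => dist (x p.1) (x p.2)) hmem
    refine claimDisj f hf c μ hμ Hext (fun j => Metric.ball (x j) (δ/2))
      (fun j => measurableSet_ball) ?_ ?_
    · intro j k hjk
      refine Set.disjoint_left.2 fun y hyj hyk => ?_
      have h1 : dist (x j) (x k) ≤ dist (x j) y + dist y (x k) := dist_triangle _ _ _
      rw [Metric.mem_ball] at hyj hyk
      rw [dist_comm] at hyj
      have := hδle j k hjk
      linarith
    · intro j
      exact hsupp (x j) (hxmem j) _ Metric.isOpen_ball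
        (Metric.mem_ball_self (by linarith))
  have hfin : (Uᶜ : Set E).Finite := by
    by_contra hinf
    obtain ⟨t, hts, htc⟩ :=
      (show (Uᶜ : Set E).Infinite from hinf).exists_subset_card_eq (n+2)
    have := hcard t hts
    omega
  set s : Finset E := hfin.toFinset with hsdef
  have hscoe : (↑s : Set E) = Uᶜ := hfin.coe_toFinset
  have hs0 : μ (↑s : Set E)ᶜ = 0 := by rw [hscoe, compl_compl]; exact hU0
  have hscard : s.card ≤ n + 1 := hcard s (by rw [hscoe])
  have hatom : ∀ x ∈ s, μ {x} ≠ 0 := by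
    intro x hxs hx0
    classical
    set t : Finset E := s.erase x with htdef
    set δ : ℝ := if h : t.Nonempty then t.inf' h (fun y => dist x y) else 1 with hδ
    have hδpos : 0 < δ := by
      rw [hδ]
      split_ifs with h
      · rw [Finset.lt_inf'_iff]
        intro y hy
        exact dist_pos.2 (Ne.symm (Finset.ne_of_mem_erase hy))
      · norm_num
    have hball : Metric.ball x δ ∩ (↑s : Set E) ⊆ {x} := by
      intro y ⟨hy1, hy2⟩
      by_contra hyx
      have hyt : y ∈ t := Finset.mem_erase.2 ⟨hyx, hy2⟩
      have ht : t.Nonempty := ⟨y, hyt⟩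
      have hle : δ ≤ dist x y := by
        rw [hδ, dif_pos ht]
        exact Finset.inf'_le _ hyt
      rw [Metric.mem_ball, dist_comm] at hy1
      linarith
    have hmb : μ (Metric.ball x δ) = 0 := by
      rw [← measure_inter_add_diff (Metric.ball x δ) s.measurableSet]
      have e1 : μ (Metric.ball x δ ∩ ↑s) = 0 :=
        le_antisymm (le_trans (measure_mono hball) (le_of_eq hx0)) (by positivity)
      have e2 : μ (Metric.ball x δ \ ↑s) = 0 :=
        measure_mono_null (fun y hy => hy.2) hs0
      rw [e1, e2, add_zero]
    have hxU : x ∉ U := by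
      have hxc : x ∈ (↑s : Set E) := hxs
      rw [hscoe] at hxc
      exact hxc
    exact hsupp x hxU _ Metric.isOpen_ball (Metric.mem_ball_self hδpos) hmb
  refine ⟨s, hs0, hatom, hscard, ?_⟩
  by_contra hnli
  obtain ⟨b, hb0, x₀, hbx₀⟩ := Fintype.not_linearIndependent_iff.1 hnli
  have hw : ∀ x : ↥s, (μ {(x : E)}).toReal ≠ 0 :=
    fun x => ENNReal.toReal_ne_zero.2 ⟨hatom _ x.2, measure_ne_top μ _⟩
  refine key f hf c μ hμ Hext (fun x : ↥s => ({(x : E)} : Set E))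
    (fun x => measurableSet_singleton _)
    (fun x y hxy => Set.disjoint_singleton.2 (fun h => hxy (Subtype.coe_injective h)))
    (fun x => b x / (μ {(x : E)}).toReal) ?_ ?_ x₀
    (div_ne_zero hbx₀ (hw x₀)) (hatom _ x₀.2)
  · have hlast := congrFun hb0 (Fin.last n)
    simp only [Finset.sum_apply, Pi.smul_apply, Fin.snoc_last, smul_eq_mul, mul_one,
      Pi.zero_apply] at hlast
    calc ∑ x : ↥s, b x / (μ {(x : E)}).toReal * (μ {(x : E)}).toReal
        = ∑ x : ↥s, b x := Finset.sum_congr rfl fun x _ => div_mul_cancel₀ _ (hw x)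
      _ = 0 := hlast
  · intro i
    have hcomp := congrFun hb0 (Fin.castSucc i)
    simp only [Finset.sum_apply, Pi.smul_apply, Fin.snoc_castSucc, smul_eq_mul,
      Pi.zero_apply] at hcomp
    calc ∑ x : ↥s, b x / (μ {(x : E)}).toReal * ∫ y in ({(x : E)} : Set E), f i y ∂μ
        = ∑ x : ↥s, b x * f i (x : E) := by
          refine Finset.sum_congr rfl fun x _ => ?_
          rw [singleton_integral, ← mul_assoc, div_mul_cancel₀ _ (hw x)]
      _ = 0 := hcomp

lemma reverse {n : ℕ} (f : Fin n → E → ℝ) (hf : ∀ i, Continuous (f i)) (c : Fin n → ℝ)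
    (μ : Measure E) [IsProbabilityMeasure μ]
    (s : Finset E) (hs0 : μ (↑s : Set E)ᶜ = 0)
    (hli : LinearIndependent ℝ
      (fun x : ↥s => (Fin.snoc (fun i : Fin n => f i (x : E)) (1 : ℝ) : Fin (n+1) → ℝ))) :
    ∀ μ₁ μ₂ : Measure E, IsProbabilityMeasure μ₁ → IsProbabilityMeasure μ₂ →
        (∀ i, (∫ x, f i x ∂μ₁) = c i) → (∀ i, (∫ x, f i x ∂μ₂) = c i) →
        ∀ α : ℝ, 0 < α → α < 1 →
        μ = ENNReal.ofReal α • μ₁ + ENNReal.ofReal (1 - α) • μ₂ → μ₁ = μ₂ := by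
  intro μ₁ μ₂ P1 P2 hc₁ hc₂ α hα0 hα1 hdec
  have hnull : ∀ (ν : Measure E) (β : ℝ), 0 < β →
      μ = ENNReal.ofReal β • ν + (μ - ENNReal.ofReal β • ν) → True := fun _ _ _ _ => trivial
  have hsplit : ENNReal.ofReal α * μ₁ (↑s : Set E)ᶜ
      + ENNReal.ofReal (1 - α) * μ₂ (↑s : Set E)ᶜ = 0 := by
    have h := congrArg (fun m : Measure E => m (↑s : Set E)ᶜ) hdec
    simp only [Measure.coe_add, Pi.add_apply, Measure.smul_apply, smul_eq_mul] at h
    rw [hs0] at h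
    exact h.symm
  have hμ₁0 : μ₁ (↑s : Set E)ᶜ = 0 := by
    have h1 := (add_eq_zero.1 hsplit).1
    rcases mul_eq_zero.1 h1 with h' | h'
    · exact absurd h' (fun hz => absurd (ENNReal.ofReal_eq_zero.1 hz) (not_le.2 hα0))
    · exact h'
  have hμ₂0 : μ₂ (↑s : Set E)ᶜ = 0 := by
    have h1 := (add_eq_zero.1 hsplit).2
    rcases mul_eq_zero.1 h1 with h' | h'
    · exact absurd h' (fun hz => absurd (ENNReal.ofReal_eq_zero.1 hz) (not_le.2 (by linarith)))
    · exact h'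
  have key2 : ∀ x ∈ s, μ₁ {x} = μ₂ {x} := by
    set d : ↥s → ℝ := fun x => (μ₁ {(x : E)}).toReal - (μ₂ {(x : E)}).toReal with hd
    have hsum : ∑ x : ↥s, d x •
        (Fin.snoc (fun i : Fin n => f i (x : E)) (1 : ℝ) : Fin (n+1) → ℝ) = 0 := by
      funext k
      rw [Finset.sum_apply]
      refine Fin.lastCases ?_ ?_ k
      · simp only [Pi.smul_apply, Fin.snoc_last, smul_eq_mul, mul_one, Pi.zero_apply]
        have e1 : ∑ x : ↥s, (μ₁ {(x : E)}).toReal = 1 := by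
          rw [Finset.univ_eq_attach, Finset.sum_attach s (fun x => (μ₁ {x}).toReal)]
          exact atomic_mass μ₁ s hμ₁0
        have e2 : ∑ x : ↥s, (μ₂ {(x : E)}).toReal = 1 := by
          rw [Finset.univ_eq_attach, Finset.sum_attach s (fun x => (μ₂ {x}).toReal)]
          exact atomic_mass μ₂ s hμ₂0
        calc ∑ x : ↥s, d x
            = ∑ x : ↥s, ((μ₁ {(x : E)}).toReal - (μ₂ {(x : E)}).toReal) :=
              Finset.sum_congr rfl fun x _ => by rw [hd]
          _ = 0 := by rw [Finset.sum_sub_distrib, e1, e2, sub_self]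
      · intro i
        simp only [Pi.smul_apply, Fin.snoc_castSucc, smul_eq_mul, Pi.zero_apply]
        have e1 : ∑ x : ↥s, (μ₁ {(x : E)}).toReal * f i (x : E) = c i := by
          rw [Finset.univ_eq_attach, Finset.sum_attach s (fun x => (μ₁ {x}).toReal * f i x)]
          rw [← atomic_integral μ₁ s hμ₁0 (f i) (hf i)]
          exact hc₁ i
        have e2 : ∑ x : ↥s, (μ₂ {(x : E)}).toReal * f i (x : E) = c i := by
          rw [Finset.univ_eq_attach, Finset.sum_attach s (fun x => (μ₂ {x}).toReal * f i x)]
          rw [← atomic_integral μ₂ s hμ₂0 (f i) (hf i)]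
          exact hc₂ i
        calc ∑ x : ↥s, d x * f i (x : E)
            = ∑ x : ↥s, ((μ₁ {(x : E)}).toReal * f i (x : E)
              - (μ₂ {(x : E)}).toReal * f i (x : E)) := by
              refine Finset.sum_congr rfl fun x _ => ?_
              rw [hd]; ring
          _ = 0 := by rw [Finset.sum_sub_distrib, e1, e2, sub_self]
    have hzero := Fintype.linearIndependent_iff.1 hli d hsum
    intro x hx
    have hz := hzero ⟨x, hx⟩
    rw [hd] at hz
    have : (μ₁ {x}).toReal = (μ₂ {x}).toReal := by
      simpa [sub_eq_zero] using hz
    exact (ENNReal.toReal_eq_toReal_iff' (measure_ne_top μ₁ _) (measure_ne_top μ₂ _)).1 this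
  calc μ₁ = ∑ x ∈ s, μ₁ {x} • Measure.dirac x := atomicRepr μ₁ s hμ₁0
    _ = ∑ x ∈ s, μ₂ {x} • Measure.dirac x :=
        Finset.sum_congr rfl (fun x hx => by rw [key2 x hx])
    _ = μ₂ := (atomicRepr μ₂ s hμ₂0).symm

end Helpers

/-- Karr: for the set K of probability measures on a compact metric space E
with prescribed integrals ∫ fᵢ dμ = cᵢ, a measure μ ∈ K is extreme iff its support is a
finite set {x₁,…,x_k} of at most n+1 points such that the vectors
(f₁(xᵢ),…,f_n(xᵢ),1) are linearly independent. -/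
theorem stmt10 {E : Type*} [MetricSpace E] [CompactSpace E]
    [MeasurableSpace E] [BorelSpace E]
    {n : ℕ} (f : Fin n → E → ℝ) (hf : ∀ i, Continuous (f i)) (c : Fin n → ℝ)
    (μ : Measure E) [IsProbabilityMeasure μ] (hμ : ∀ i, (∫ x, f i x ∂μ) = c i) :
    (∀ μ₁ μ₂ : Measure E, IsProbabilityMeasure μ₁ → IsProbabilityMeasure μ₂ →
        (∀ i, (∫ x, f i x ∂μ₁) = c i) → (∀ i, (∫ x, f i x ∂μ₂) = c i) →
        ∀ α : ℝ, 0 < α → α < 1 →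
        μ = ENNReal.ofReal α • μ₁ + ENNReal.ofReal (1 - α) • μ₂ → μ₁ = μ₂)
    ↔ ∃ s : Finset E, μ (↑s : Set E)ᶜ = 0 ∧ (∀ x ∈ s, μ {x} ≠ 0) ∧ s.card ≤ n + 1 ∧
        LinearIndependent ℝ
          (fun x : ↥s => (Fin.snoc (fun i : Fin n => f i (x : E)) (1 : ℝ) : Fin (n+1) → ℝ)) := by
  constructor
  · intro Hext
    exact forward f hf c μ hμ Hext
  · rintro ⟨s, hs0, -, -, hli⟩
    exact reverse f hf c μ s hs0 hli
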